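/- Let n ≥ 2, 1 ≤ k ≤ n−1, w ∈ S_n, and let w′ = 𝒜_k(w) (so w′_s = w_s for 1 ≤ s ≤ k). (1) If w_k > w_{k+1}, then maj(w_1⋯w_{k+1}) = maj(w′_1⋯w′_k) + k and inv(w′_k w′_{k+1}⋯w′_n) = inv(w_{k+1}⋯w_n) + (n−k). (2) If w_k < w_{k+1}, then maj(w_1⋯w_{k+1}) = maj(w′_1⋯w′_k) and inv(w′_k w′_{k+1}⋯w′_n) = inv(w_{k+1}⋯w_n). -/

import Mathlib

open scoped BigOperators Classical

noncomputable section

/-- The coefficient field `𝔽 = ℂ(q,t)`. -/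
abbrev Fqt : Type := FractionRing (MvPolynomial (Fin 2) ℂ)

/-- The indeterminate `q` of `𝔽 = ℂ(q,t)`. -/
def qv : Fqt := algebraMap (MvPolynomial (Fin 2) ℂ) Fqt (MvPolynomial.X 0)

/-- The indeterminate `t` of `𝔽 = ℂ(q,t)`. -/
def tv : Fqt := algebraMap (MvPolynomial (Fin 2) ℂ) Fqt (MvPolynomial.X 1)

/-! ### Words and permutations (one-line notation, values `1,…,n`) -/

/-- `w_s`, the `s`-th letter of the word `w` (1-based indexing). -/
def nthW (w : List ℕ) (s : ℕ) : ℕ := w.getD (s - 1) 0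

/-- All permutations of `{1,…,n}` in one-line notation, as a list of words. -/
def PermWords (n : ℕ) : List (List ℕ) := (List.range' 1 n).permutations

/-- `w` is (the one-line notation of) a permutation of `{1,…,n}`. -/
def IsPermList (n : ℕ) (w : List ℕ) : Prop := w.Perm (List.range' 1 n)

/-- The inverse descent set `iDes(w) = Des(w⁻¹)`:
the set of `i` such that `i+1` appears to the left of `i` in `w`. -/
def iDes (w : List ℕ) : Finset ℕ :=
  (Finset.Icc 1 (w.length - 1)).filter fun i => w.idxOf (i + 1) < w.idxOf i

/-- The modified inverse descent set `¯iDes(w)`. -/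
def iDesBar (w : List ℕ) : Finset ℕ :=
  if nthW w w.length = nthW w (w.length - 1) - 1 then (iDes w).erase (nthW w w.length)
  else iDes w

/-- The descent set `Des(w) = {i : w_i > w_{i+1}}`. -/
def desSet (w : List ℕ) : Finset ℕ :=
  (Finset.Icc 1 (w.length - 1)).filter fun i => nthW w (i + 1) < nthW w i

/-- The standardization of a word. -/
def std (w : List ℕ) : List ℕ :=
  (List.range w.length).map fun s =>
    ((List.range w.length).filter fun t =>
      decide (w.getD t 0 < w.getD s 0 ∨ (w.getD t 0 = w.getD s 0 ∧ t ≤ s))).length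

/-- The subword `w_{[a,b]} = w_a w_{a+1} ⋯ w_b` (1-based). -/
def subw (w : List ℕ) (a b : ℕ) : List ℕ := (w.drop (a - 1)).take (b - a + 1)

/-- The restriction `w|_A` of a word to a set of (1-based) positions. -/
def wordAt (w : List ℕ) (A : Finset ℕ) : List ℕ := (A.sort (· ≤ ·)).map fun c => nthW w c

/-! ### Quasisymmetric and symmetric functions
    (formal power series in variables `x_0, x_1, x_2, …` over `𝔽`) -/

/-- The unique weakly increasing word whose content is the monomial `d`. -/
def sortedWord (d : ℕ →₀ ℕ) : List ℕ := (Finsupp.toMultiset d).sort (· ≤ ·)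

/-- Gessel's fundamental quasisymmetric function `F_{n,S}`. -/
def FQS (n : ℕ) (S : Finset ℕ) : MvPowerSeries ℕ Fqt := fun d =>
  if (sortedWord d).length = n ∧
      ∀ i ∈ S, (sortedWord d).getD (i - 1) 0 < (sortedWord d).getD i 0
  then 1 else 0

/-- Complete homogeneous symmetric function `h_d`. -/
def hSym (d : ℕ) : MvPowerSeries ℕ Fqt := FQS d ∅

/-- The decreasing list of the parts of a partition of `n`. -/
def partitionList {n : ℕ} (p : Nat.Partition n) : List ℕ := (p.parts.sort (· ≤ ·)).reverse

/-- Monomial symmetric function `m_ε` of a partition `ε ⊢ n`. -/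
def mSym {n : ℕ} (p : Nat.Partition n) : MvPowerSeries ℕ Fqt := fun d =>
  if Multiset.map (fun v => d v) d.support.val = p.parts then 1 else 0

/-- Cells of the Young diagram of a partition given by its list of row lengths
(French notation, rows indexed from the bottom). -/
def pCells (ρ : List ℕ) : Finset (ℕ × ℕ) :=
  (Finset.range ρ.length).biUnion fun i0 => (Finset.Icc 1 (ρ.getD i0 0)).image fun j => (i0 + 1, j)

/-- Semistandard Young tableaux of shape `ρ` (rows weakly increasing, columns strictly
increasing bottom-to-top) with content monomial `d`; the entry `v+1` corresponds to
the variable indexed by `v`. -/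
def SSYTset (ρ : List ℕ) (d : ℕ →₀ ℕ) : Set ((ℕ × ℕ) → ℕ) :=
  {T | (∀ u, u ∉ pCells ρ → T u = 0) ∧ (∀ u ∈ pCells ρ, 1 ≤ T u) ∧
    (∀ i j, (i, j) ∈ pCells ρ → (i, j + 1) ∈ pCells ρ → T (i, j) ≤ T (i, j + 1)) ∧
    (∀ i j, (i, j) ∈ pCells ρ → (i + 1, j) ∈ pCells ρ → T (i, j) < T (i + 1, j)) ∧
    (∀ v : ℕ, ((pCells ρ).filter fun u => T u = v + 1).card = d v)}

/-- The Schur function `s_ρ` for a partition given by its row lengths. -/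
def schurF (ρ : List ℕ) : MvPowerSeries ℕ Fqt := fun d => ((SSYTset ρ d).ncard : Fqt)

/-! ### Diagrams and filled diagrams -/

/-- A diagram whose columns are intervals: the `j`-th entry `(lo,hi)` means that
column `j` (1-based) occupies rows `lo, lo+1, …, hi`. -/
abbrev Diagram := List (ℕ × ℕ)

/-- The cells `(row, column)` of a diagram. -/
def dCells (D : Diagram) : Finset (ℕ × ℕ) :=
  (Finset.range D.length).biUnion fun j0 =>
    (Finset.Icc (D.getD j0 (1, 0)).1 (D.getD j0 (1, 0)).2).image fun i => (i, j0 + 1)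

/-- `|D|`, the number of cells. -/
def dSize (D : Diagram) : ℕ := (dCells D).card

/-- All rows are `≥ 1` and all columns are nonempty intervals. -/
def ValidDiagram (D : Diagram) : Prop := ∀ c ∈ D, 1 ≤ c.1 ∧ c.1 ≤ c.2

def maxRow (D : Diagram) : ℕ := (D.map Prod.snd).foldr max 0

/-- The cells of `D` listed in reading order: row by row, top row first,
left to right within each row. -/
def readingList (D : Diagram) : List (ℕ × ℕ) :=
  ((List.range (maxRow D)).reverse).flatMap fun i0 =>
    (List.range D.length).filterMap fun j0 =>
      if (D.getD j0 (1, 0)).1 ≤ i0 + 1 ∧ i0 + 1 ≤ (D.getD j0 (1, 0)).2 then some (i0 + 1, j0 + 1)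
      else none

/-- The entry `w_{N_D(u)}` of the word `w` at the cell `u` of `D`. -/
def dEntry (D : Diagram) (w : List ℕ) (u : ℕ × ℕ) : ℕ :=
  w.getD ((readingList D).idxOf u) 0

/-- The number of inversion pairs of cells of `D` with respect to `w`. -/
def invCount (D : Diagram) (w : List ℕ) : ℕ :=
  ((dCells D ×ˢ dCells D).filter fun p =>
    dEntry D w p.2 < dEntry D w p.1 ∧
      ((p.1.1 = p.2.1 ∧ p.1.2 < p.2.2) ∨ (p.1.1 = p.2.1 + 1 ∧ p.2.2 < p.1.2))).card

/-- The descent cells of `D` with respect to `w`. -/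
def descentCells (D : Diagram) (w : List ℕ) : Finset (ℕ × ℕ) :=
  (dCells D).filter fun u =>
    (u.1 - 1, u.2) ∈ dCells D ∧ dEntry D w (u.1 - 1, u.2) < dEntry D w u

/-- The non-bottom cells of `D`. -/
def nonBottom (D : Diagram) : Finset (ℕ × ℕ) :=
  (dCells D).filter fun u => (u.1 - 1, u.2) ∈ dCells D

/-- `stat_{(D,f)}(w) = inv_D(w) ⋅ maj_{(D,f)}(w)`. -/
def statD (D : Diagram) (f : ℕ × ℕ → Fqt) (w : List ℕ) : Fqt :=
  qv ^ invCount D w * ∏ u ∈ descentCells D w, f u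

/-- The generalized modified Macdonald polynomial `H_{(D,f)}[X;q,t]`. -/
def genH (D : Diagram) (f : ℕ × ℕ → Fqt) : MvPowerSeries ℕ Fqt :=
  ((PermWords (dSize D)).map fun w => statD D f w • FQS (dSize D) (iDes w)).sum

/-- The subword of `w` on the positions `{N_D(u) : u ∈ E}` where
`E = {u ∈ D : P u}`, i.e. `w ↓^D_E`. -/
def wRestrict (D : Diagram) (P : ℕ × ℕ → Bool) (w : List ℕ) : List ℕ :=
  ((readingList D).zip w).filterMap fun p => if P p.1 then some p.2 else none

/-! ### Partitions, standard fillings, (modified) Macdonald polynomials -/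

/-- A partition presented by its (weakly decreasing, positive) column lengths. -/
def IsPartitionCols (a : List ℕ) : Prop := a.Pairwise (· ≥ ·) ∧ ∀ x ∈ a, 1 ≤ x

/-- The Young diagram of a partition given by its column lengths. -/
def colDiagram (a : List ℕ) : Diagram := a.map fun h => (1, h)

/-- The standard filling `f^st_μ(u) = q^{-arm(u)} t^{leg(u)+1}` of the partition with
column lengths `a`. -/
def fstFill (a : List ℕ) : ℕ × ℕ → Fqt := fun u =>
  qv ^ (-((((Finset.range a.length).filter fun j0 => u.2 ≤ j0 ∧ u.1 ≤ a.getD j0 0).card : ℤ))) *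
    tv ^ (a.getD (u.2 - 1) 0 - u.1 + 1)

/-- `T_μ = ∏_{(i,j) ∈ μ} t^{i-1} q^{j-1}`. -/
def Tstat (a : List ℕ) : Fqt :=
  ∏ u ∈ dCells (colDiagram a), (tv ^ (u.1 - 1) * qv ^ (u.2 - 1))

/-- The modified Macdonald polynomial `H_μ[X;q,t]` of the partition with column lengths `a`. -/
def Hmac (a : List ℕ) : MvPowerSeries ℕ Fqt := genH (colDiagram a) (fstFill a)

/-- The Macdonald intersection polynomial
`I_{λ,μ}[X;q,t] = (T_λ H_μ - T_μ H_λ)/(T_λ - T_μ)` (partitions by column lengths). -/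
def Imac (lam mu : List ℕ) : MvPowerSeries ℕ Fqt :=
  (Tstat lam - Tstat mu)⁻¹ • (Tstat lam • Hmac mu - Tstat mu • Hmac lam)

/-! ### Butler permutations -/

/-- The number of arcs of the matching `M(w)` for `w ∈ S_n`. -/
def numArcs (n : ℕ) : ℕ := if n % 2 = 0 then n / 2 + 1 else (n + 1) / 2

/-- The directed arc `α_k(w)` of the matching `M(w)`. -/
def arcW (w : List ℕ) (k : ℕ) : ℕ × ℕ :=
  let n := w.length
  if n % 2 = 0 then
    if k = 1 then (nthW w n, n + 1)
    else if k ≤ n / 2 then (nthW w (n - 2 * (k - 1)), nthW w (n - 2 * (k - 1) + 1))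
    else (0, nthW w 1)
  else
    if k ≤ (n - 1) / 2 then (nthW w (n - 2 * (k - 1) - 1), nthW w (n - 2 * (k - 1)))
    else (0, nthW w 1)

/-- The arc is in the forward direction. -/
def forwardArc (A : ℕ × ℕ) : Bool := decide (A.1 < A.2)

/-- The arc is in the reverse direction. -/
def reverseArc (A : ℕ × ℕ) : Bool := decide (A.2 < A.1)

/-- The two arcs cross. -/
def crossArc (A B : ℕ × ℕ) : Bool :=
  decide ((min A.1 A.2 < min B.1 B.2 ∧ min B.1 B.2 < max A.1 A.2 ∧ max A.1 A.2 < max B.1 B.2) ∨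
    (min B.1 B.2 < min A.1 A.2 ∧ min A.1 A.2 < max B.1 B.2 ∧ max B.1 B.2 < max A.1 A.2))

/-- The arc `A` is nested by the arc `B`. -/
def nestedArc (A B : ℕ × ℕ) : Bool :=
  decide (min B.1 B.2 < min A.1 A.2 ∧ max A.1 A.2 < max B.1 B.2)

/-- `w` is a Butler permutation, i.e. `w ∈ 𝔅_n`. -/
def isButlerB (w : List ℕ) : Bool :=
  let K := numArcs w.length
  let s := (Finset.Icc 1 (K - 1)).filter fun k => crossArc (arcW w k) (arcW w (k + 1)) = false
  if h : s.Nonempty then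
    let k := s.min' h
    (nestedArc (arcW w (k + 1)) (arcW w k) && reverseArc (arcW w k)) ||
      (!nestedArc (arcW w (k + 1)) (arcW w k) && forwardArc (arcW w k))
  else reverseArc (arcW w (K - 1))

/-! ### The column exchange operators `S_j`, `S̄_j`, and cycling -/

/-- The restriction of `(D,f)` to columns `c, c+1` lies in `𝒱(n,m)`. -/
def memVAt (D : Diagram) (f : ℕ × ℕ → Fqt) (c n m : ℕ) : Prop :=
  1 ≤ m ∧ m < n ∧ D.getD (c - 1) (1, 0) = (1, n) ∧ D.getD c (1, 0) = (1, m) ∧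
    ∀ i, 1 < i → i ≤ m → f (i, c) = qv⁻¹ * f (m + 1, c) * f (i, c + 1)

/-- Exchange columns `j` and `j+1` (1-based) of a diagram. -/
def swapCols (j : ℕ) (D : Diagram) : Diagram :=
  (D.set (j - 1) (D.getD j (1, 0))).set j (D.getD (j - 1) (1, 0))

/-- The filling of `S_j(D,f)`, where `m` is the length of column `j+1` of `D`. -/
def SjFill (j m : ℕ) (f : ℕ × ℕ → Fqt) : ℕ × ℕ → Fqt := fun u =>
  if u.2 = j then f (u.1, j + 1)
  else if u.2 = j + 1 then (if u.1 = m + 1 then qv⁻¹ * f (m + 1, j) else f (u.1, j))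
  else f u

/-- The column exchange operator `S_j` on filled diagrams. -/
def SjOp (j : ℕ) (Df : Diagram × (ℕ × ℕ → Fqt)) : Diagram × (ℕ × ℕ → Fqt) :=
  (swapCols j Df.1, SjFill j (Df.1.getD j (1, 0)).2 Df.2)

/-- The restriction of `(D,f)` to columns `c, c+1` lies in `𝒱̄(n,m;α)`. -/
def memVbarAt (D : Diagram) (f : ℕ × ℕ → Fqt) (c n m : ℕ) (α : Fqt) : Prop :=
  1 ≤ m ∧ m < n ∧ D.getD (c - 1) (1, 0) = (1, n) ∧ D.getD c (1, 0) = (2, m) ∧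
    qv⁻¹ * f (m + 1, c) = α ∧ ∀ i, 2 < i → i ≤ m → f (i, c) = α * f (i, c + 1)

/-- The filling of `S̄_j(D,f)`, where `m` is the length of column `j+1` of `D`. -/
def SbarFillAt (j m : ℕ) (α : Fqt) (f : ℕ × ℕ → Fqt) : ℕ × ℕ → Fqt := fun u =>
  if u.2 = j then (if u.1 = 2 then α⁻¹ * f (2, j) else f (u.1, j + 1))
  else if u.2 = j + 1 then (if u.1 = m + 1 then α else f (u.1, j))
  else f u

/-- Shapes for `S̄_j`: columns `(1,n), (2,m)` become `(1,m), (2,n)`. -/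
def sbarCols (j : ℕ) (D : Diagram) : Diagram :=
  (D.set (j - 1) (1, (D.getD j (1, 0)).2)).set j (2, (D.getD (j - 1) (1, 0)).2)

/-- The operator `S̄_j` on filled diagrams. -/
def SbarOp (j : ℕ) (α : Fqt) (Df : Diagram × (ℕ × ℕ → Fqt)) : Diagram × (ℕ × ℕ → Fqt) :=
  (sbarCols j Df.1, SbarFillAt j (Df.1.getD j (1, 0)).2 α Df.2)

/-- The cycling operator on diagrams: the leftmost column is moved to the far right
and shifted up by one row. -/
def cycD (D : Diagram) : Diagram :=
  D.tail ++ [((D.headD (1, 0)).1 + 1, (D.headD (1, 0)).2 + 1)]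

/-- The filling inherited under cycling. -/
def cycFill (D : Diagram) (f : ℕ × ℕ → Fqt) : ℕ × ℕ → Fqt := fun u =>
  if u.2 = D.length then f (u.1 - 1, 1) else f (u.1, u.2 + 1)

/-- The cycling operator on filled diagrams. -/
def cycOp (Df : Diagram × (ℕ × ℕ → Fqt)) : Diagram × (ℕ × ℕ → Fqt) :=
  (cycD Df.1, cycFill Df.1 Df.2)

/-! ### The deformation `𝔇_{λ,μ}` and Butler permutations of type `(λ,μ)` -/

/-- Apply a sequence of column exchange operators, leftmost entry first. -/
def applyS (ks : List ℕ) (Df : Diagram × (ℕ × ℕ → Fqt)) : Diagram × (ℕ × ℕ → Fqt) :=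
  ks.foldl (fun acc k => SjOp k acc) Df

/-- `𝔇_{λ,μ}(μ, f^st_μ)`: here `ν` has column lengths `a`, `λ = ν` minus the top cell of
column `i`, `μ = ν` minus the top cell of column `j` (`i < j`).  The `j`-th column is moved
to the far left, the original `i`-th column to the far right, and then cycling is applied. -/
def deformMu (a : List ℕ) (i j : ℕ) : Diagram × (ℕ × ℕ → Fqt) :=
  let mu := a.set (j - 1) (a.getD (j - 1) 0 - 1)
  cycOp (applyS ((List.range' 1 (j - 1)).reverse ++ List.range' (i + 1) (a.length - 1 - i))
    (colDiagram mu, fstFill mu))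

/-- `𝔇_{λ,μ}(λ, f^st_λ)`: the `j`-th column is moved to the far right, the `i`-th column
to the far left, and then cycling is applied. -/
def deformLa (a : List ℕ) (i j : ℕ) : Diagram × (ℕ × ℕ → Fqt) :=
  let lam := a.set (i - 1) (a.getD (i - 1) 0 - 1)
  cycOp (applyS (List.range' j (a.length - j) ++ (List.range' 1 (i - 1)).reverse)
    (colDiagram lam, fstFill lam))

/-- The subword of `w` governing membership in `𝔅_{λ,μ}`: restrict to the last two
columns of `D_μ` and take positions `a_i - a_j, …, a_i + a_j - 1`. -/
def butlerWordLM (a : List ℕ) (i j : ℕ) (w : List ℕ) : List ℕ :=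
  subw (wRestrict (deformMu a i j).1
      (fun u => decide (u.2 = a.length - 1 ∨ u.2 = a.length)) w)
    (a.getD (i - 1) 0 - a.getD (j - 1) 0) (a.getD (i - 1) 0 + a.getD (j - 1) 0 - 1)

/-- Membership in the set `𝔅_{λ,μ}` of Butler permutations of type `(λ,μ)`. -/
def memButlerLM (a : List ℕ) (i j : ℕ) (w : List ℕ) : Prop :=
  isButlerB (std (butlerWordLM a i j w)) = true

/-- The statistic `stat_{λ,μ}`. -/
def statLM (a : List ℕ) (i j : ℕ) (w : List ℕ) : Fqt :=
  statD (deformMu a i j).1 (deformMu a i j).2 w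

/-! ### LLT polynomials -/

/-- A skew partition, given by the row lengths of the outer and inner shapes. -/
abbrev SkewShape := (List ℕ) × (List ℕ)

/-- The cells of a skew shape. -/
def skCells (s : SkewShape) : List (ℕ × ℕ) :=
  (List.range s.1.length).flatMap fun i0 =>
    (List.range' (s.2.getD i0 0 + 1) (s.1.getD i0 0 - s.2.getD i0 0)).map fun j => (i0 + 1, j)

/-- The cells of a tuple of skew shapes, tagged by the component index (0-based). -/
def tCells (ν : List SkewShape) : List (ℕ × ℕ × ℕ) :=
  (List.range ν.length).flatMap fun k =>
    (skCells (ν.getD k ([], []))).map fun c => (k, c.1, c.2)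

/-- The content `c(u) = i - j` of a cell of a tuple of skew shapes. -/
def contentOf (u : ℕ × ℕ × ℕ) : ℤ := (u.2.1 : ℤ) - (u.2.2 : ℤ)

/-- Reading order comparison: increasing content, ties broken left to right. -/
def lltLe (u v : ℕ × ℕ × ℕ) : Bool :=
  decide (contentOf u < contentOf v ∨
    (contentOf u = contentOf v ∧ (u.1 < v.1 ∨ (u.1 = v.1 ∧ u.2.2 ≤ v.2.2))))

/-- The cells of a tuple of skew shapes in reading order. -/
def lltReading (ν : List SkewShape) : List (ℕ × ℕ × ℕ) := (tCells ν).mergeSort lltLe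

def lltSize (ν : List SkewShape) : ℕ := (tCells ν).length

/-- The entry at the cell `u` of the tableau whose reading word is `w`. -/
def lltEntry (ν : List SkewShape) (w : List ℕ) (u : ℕ × ℕ × ℕ) : ℕ :=
  w.getD ((lltReading ν).idxOf u) 0

/-- `w` is the reading word of a standard Young tableau of shape `ν`. -/
def lltStandard (ν : List SkewShape) (w : List ℕ) : Prop :=
  ∀ u ∈ tCells ν,
    ((u.1, u.2.1, u.2.2 + 1) ∈ tCells ν →
      lltEntry ν w u < lltEntry ν w (u.1, u.2.1, u.2.2 + 1)) ∧
    ((u.1, u.2.1 + 1, u.2.2) ∈ tCells ν →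
      lltEntry ν w u < lltEntry ν w (u.1, u.2.1 + 1, u.2.2))

/-- The number of inversions of the standard tableau with reading word `w`. -/
def lltInv (ν : List SkewShape) (w : List ℕ) : ℕ :=
  ((tCells ν).product (tCells ν)).countP fun p =>
    decide (lltEntry ν w p.2 < lltEntry ν w p.1 ∧
      ((p.1.1 < p.2.1 ∧ contentOf p.1 = contentOf p.2) ∨
        (p.2.1 < p.1.1 ∧ contentOf p.1 = contentOf p.2 + 1)))

/-- The LLT polynomial of a tuple of skew shapes. -/
def LLTpoly (ν : List SkewShape) : MvPowerSeries ℕ Fqt :=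
  (((PermWords (lltSize ν)).filter fun w => decide (lltStandard ν w)).map fun w =>
    (qv ^ lltInv ν w) • FQS (lltSize ν) (iDes w)).sum

/-! ### Ribbons -/

/-- Number of up-steps among the first `p` steps of the ribbon with content
interval `[r, r+s]` and descent set `S`. -/
def ribbonUp (r : ℕ) (S : Finset ℕ) (p : ℕ) : ℕ :=
  ((Finset.Icc (r + 1) (r + p)).filter fun x => x ∈ S).card

/-- The cells of the ribbon `R_{[r,r+s]}(S)`; the cell of content `r + p`. -/
def ribbonCellList (r s : ℕ) (S : Finset ℕ) : List (ℕ × ℕ) :=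
  (List.range (s + 1)).map fun p =>
    (r + s + 1 + ribbonUp r S p, s + 1 - (p - ribbonUp r S p))

/-- The ribbon `R_{[r,r+s]}(S)`: the unique ribbon (as a skew shape) whose cells have
content set `{r, …, r+s}` and whose descent set is `S`. -/
def ribbonR (r s : ℕ) (S : Finset ℕ) : SkewShape :=
  (((List.range (r + s + 1 + ribbonUp r S s)).map fun i0 =>
      (if ((ribbonCellList r s S).filterMap fun u =>
            if u.1 = i0 + 1 then some u.2 else none) = []
        then s + 1
        else ((ribbonCellList r s S).filterMap fun u =>
            if u.1 = i0 + 1 then some u.2 else none).foldr max 0)),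
    ((List.range (r + s + 1 + ribbonUp r S s)).map fun i0 =>
      (if ((ribbonCellList r s S).filterMap fun u =>
            if u.1 = i0 + 1 then some u.2 else none) = []
        then s + 1
        else (((ribbonCellList r s S).filterMap fun u =>
            if u.1 = i0 + 1 then some u.2 else none).foldr min (s + 1)) - 1)))

/-- A single cell of content `a`, as a skew shape. -/
def cellC (a : ℕ) : SkewShape := ribbonR a 0 ∅

/-! ### Laurent polynomials in `q, t` -/

/-- Evaluation of a formal (integer) Laurent polynomial in `q, t`, presented as a list of
terms `(coefficient, q-exponent, t-exponent)`. -/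
def evalLaurent (L : List (ℤ × ℤ × ℤ)) : Fqt :=
  (L.map fun x => (x.1 : Fqt) * qv ^ x.2.1 * tv ^ x.2.2).sum

/-- `c` is a Laurent polynomial in `q` and `t` with nonnegative integer coefficients. -/
def IsNonnegLaurent (c : Fqt) : Prop :=
  ∃ L : List (ℕ × ℤ × ℤ), c = (L.map fun x => (x.1 : Fqt) * qv ^ x.2.1 * tv ^ x.2.2).sum

/-- `c` is a Laurent monomial `q^a t^b`. -/
def IsLaurentMonomial (c : Fqt) : Prop := ∃ e1 e2 : ℤ, c = qv ^ e1 * tv ^ e2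

/-! ### Statistics on words, the operators `γ_x` and `𝒜_k`, super-standard words -/

/-- The major index of a word. -/
def majW (u : List ℕ) : ℕ :=
  ((Finset.Icc 1 (u.length - 1)).filter fun i => nthW u (i + 1) < nthW u i).sum id

/-- The inversion number of a word. -/
def invW (u : List ℕ) : ℕ :=
  (((Finset.Icc 1 u.length) ×ˢ (Finset.Icc 1 u.length)).filter fun p =>
    p.1 < p.2 ∧ nthW u p.2 < nthW u p.1).card

/-- Helper for `γ_x`: `brk` tests whether a letter begins a new block. -/
def gammaGo (brk : ℕ → Bool) : ℕ → List ℕ → List ℕ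
  | h, [] => [h]
  | h, y :: ys => if brk y then h :: gammaGo brk y ys else y :: gammaGo brk h ys

/-- The operator `γ_x`: cut `u` into blocks before each letter smaller (resp. larger) than
`x` according to whether `u_1 < x` (resp. `u_1 > x`), and move the first letter of each
block to the end of the block. -/
def gammaX (x : ℕ) (u : List ℕ) : List ℕ :=
  match u with
  | [] => []
  | h :: rest =>
    gammaGo (fun y => if h < x then decide (y < x) else decide (x < y)) h rest

/-- Assaf's operator `𝒜_k`. -/
def Aop (k : ℕ) (w : List ℕ) : List ℕ := w.take k ++ gammaX (nthW w k) (w.drop k)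

/-- The de-standardization of a permutation. -/
def dst (w : List ℕ) : List ℕ :=
  w.map fun v => 1 + ((iDes w).filter fun i => i < v).card

/-- A word is Yamanouchi. -/
def Yamanouchi (u : List ℕ) : Prop :=
  ∀ p i, 2 ≤ i → (u.drop p).count i ≤ (u.drop p).count (i - 1)

/-- `w` is a super-standard permutation of weight `lam` (given by its list of parts). -/
def IsSSS (lam : List ℕ) (w : List ℕ) : Prop :=
  Yamanouchi (dst w) ∧ ∀ s, 1 ≤ s → (dst w).count s = lam.getD (s - 1) 0

/-- The column lengths of the hook `(n-k, 1^k)`. -/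
def hookCols (n k : ℕ) : List ℕ := (k + 1) :: List.replicate (n - k - 1) 1


lemma countP_eq_sum (p : ℕ → Bool) (l : List ℕ) :
    (l.countP p : ℕ) = ∑ j ∈ Finset.range l.length, if p (l.getD j 0) then 1 else 0 := by
  induction l with
  | nil => simp
  | cons a t ih =>
    rw [List.countP_cons, List.length_cons, Finset.sum_range_succ']
    simp only [List.getD_cons_succ, List.getD_cons_zero, ih]

lemma invW_eq_sum (u : List ℕ) :
    invW u = ∑ i ∈ Finset.range u.length, ∑ j ∈ Finset.range u.length,
      if i < j ∧ u.getD j 0 < u.getD i 0 then 1 else 0 := by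
  rw [invW, Finset.card_filter, Finset.sum_product]
  rw [← Finset.Ico_add_one_right_eq_Icc, Finset.sum_Ico_eq_sum_range]
  simp only [Nat.succ_sub_one, Nat.add_sub_cancel]
  refine Finset.sum_congr rfl fun i _ => ?_
  rw [Finset.sum_Ico_eq_sum_range]
  simp only [Nat.succ_sub_one, Nat.add_sub_cancel]
  refine Finset.sum_congr rfl fun j _ => ?_
  have h1 : nthW u (1 + i) = u.getD i 0 := by simp [nthW]
  have h2 : nthW u (1 + j) = u.getD j 0 := by simp [nthW]
  rw [h1, h2]
  congr 1
  simp [Nat.add_lt_add_iff_left]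

lemma invW_nil : invW ([] : List ℕ) = 0 := by simp [invW]

lemma invW_cons (a : ℕ) (l : List ℕ) :
    invW (a :: l) = l.countP (fun b => decide (b < a)) + invW l := by
  rw [invW_eq_sum, invW_eq_sum, countP_eq_sum, List.length_cons]
  rw [Finset.sum_range_succ']
  have h1 : (∑ i ∈ Finset.range l.length, ∑ j ∈ Finset.range (l.length + 1),
      if i + 1 < j ∧ (a :: l).getD j 0 < (a :: l).getD (i + 1) 0 then 1 else 0)
      = ∑ i ∈ Finset.range l.length, ∑ j ∈ Finset.range l.length,
        if i < j ∧ l.getD j 0 < l.getD i 0 then 1 else 0 := by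
    refine Finset.sum_congr rfl fun i _ => ?_
    rw [Finset.sum_range_succ']
    simp [Nat.succ_lt_succ_iff]
  have h2 : (∑ j ∈ Finset.range (l.length + 1),
      if 0 < j ∧ (a :: l).getD j 0 < (a :: l).getD 0 0 then 1 else 0)
      = ∑ j ∈ Finset.range l.length, if l.getD j 0 < a then 1 else 0 := by
    rw [Finset.sum_range_succ']
    simp
  rw [h1, h2]
  simp only [decide_eq_true_eq]
  omega

lemma gammaGo_perm (brk : ℕ → Bool) (t : List ℕ) : ∀ h, (gammaGo brk h t).Perm (h :: t) := by
  induction t with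
  | nil => intro h; simp [gammaGo]
  | cons y ys ih =>
    intro h
    rw [gammaGo]
    by_cases hb : brk y
    · simp only [hb, if_true]
      exact (ih y).cons h
    · simp only [hb, if_false]
      exact ((ih h).cons y).trans (List.Perm.swap h y ys)

lemma gammaGo_desc (x : ℕ) (t : List ℕ) : ∀ h, h < x → (∀ y ∈ t, y ≠ x) →
    invW (gammaGo (fun y => decide (y < x)) h t) + (h :: t).countP (fun b => decide (b < x))
      = invW (h :: t) + (h :: t).length := by
  induction t with
  | nil =>
    intro h hh _
    simp [gammaGo, invW_cons, invW_nil, hh]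
  | cons y ys ih =>
    intro h hh hne
    by_cases hy : y < x
    · rw [gammaGo, if_pos (decide_eq_true hy)]
      have ihy := ih y hy (fun z hz => hne z (List.mem_cons_of_mem _ hz))
      have hc1 := (gammaGo_perm (fun y => decide (y < x)) ys y).countP_eq
        (fun b => decide (b < h))
      rw [invW_cons, invW_cons, hc1]
      have e1 : (h :: y :: ys).countP (fun b => decide (b < x))
          = (y :: ys).countP (fun b => decide (b < x)) + 1 := by
        rw [List.countP_cons (l := y :: ys)]; simp [hh]
      rw [e1, List.length_cons (as := y :: ys)]
      omega
    · have hy' : x < y := lt_of_le_of_ne (Nat.le_of_not_lt hy)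
        (Ne.symm (hne y (List.mem_cons_self)))
      have hhy : h < y := hh.trans hy'
      rw [gammaGo, if_neg (by simp [hy])]
      have ihh := ih h hh (fun z hz => hne z (List.mem_cons_of_mem _ hz))
      have hc1 := (gammaGo_perm (fun y => decide (y < x)) ys h).countP_eq
        (fun b => decide (b < y))
      have e1 : invW (y :: gammaGo (fun y => decide (y < x)) h ys)
          = ys.countP (fun b => decide (b < y)) + 1 + invW (gammaGo (fun y => decide (y < x)) h ys) := by
        rw [invW_cons, hc1, List.countP_cons]
        simp [hhy]
      have e2 : invW (h :: y :: ys)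
          = ys.countP (fun b => decide (b < h)) + (ys.countP (fun b => decide (b < y)) + invW ys) := by
        rw [invW_cons, invW_cons, List.countP_cons]
        have : ¬ (y < h) := by omega
        simp [this]
      have e3 : (h :: y :: ys).countP (fun b => decide (b < x))
          = ys.countP (fun b => decide (b < x)) + 1 := by
        rw [List.countP_cons, List.countP_cons]
        simp [hh, hy]
      have e4 : invW (h :: ys) = ys.countP (fun b => decide (b < h)) + invW ys := invW_cons _ _
      have e5 : (h :: ys).countP (fun b => decide (b < x))
          = ys.countP (fun b => decide (b < x)) + 1 := by
        rw [List.countP_cons]; simp [hh]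
      rw [e4, e5] at ihh
      rw [e1, e2, e3]
      simp only [List.length_cons] at *
      omega

lemma gammaGo_asc (x : ℕ) (t : List ℕ) : ∀ h, x < h → (∀ y ∈ t, y ≠ x) →
    invW (gammaGo (fun y => decide (x < y)) h t) + (h :: t).length
      = invW (h :: t) + (h :: t).countP (fun b => decide (x < b)) := by
  induction t with
  | nil =>
    intro h hh _
    simp [gammaGo, invW_cons, invW_nil, hh]
  | cons y ys ih =>
    intro h hh hne
    by_cases hy : x < y
    · rw [gammaGo, if_pos (decide_eq_true hy)]
      have ihy := ih y hy (fun z hz => hne z (List.mem_cons_of_mem _ hz))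
      have hc1 := (gammaGo_perm (fun y => decide (x < y)) ys y).countP_eq
        (fun b => decide (b < h))
      rw [invW_cons, invW_cons, hc1]
      have e1 : (h :: y :: ys).countP (fun b => decide (x < b))
          = (y :: ys).countP (fun b => decide (x < b)) + 1 := by
        rw [List.countP_cons (l := y :: ys)]; simp [hh]
      rw [e1, List.length_cons (as := y :: ys)]
      omega
    · have hy' : y < x := lt_of_le_of_ne (Nat.le_of_not_lt hy)
        (hne y (List.mem_cons_self))
      have hhy : y < h := hy'.trans hh
      rw [gammaGo, if_neg (by simp [hy])]
      have ihh := ih h hh (fun z hz => hne z (List.mem_cons_of_mem _ hz))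
      have hc1 := (gammaGo_perm (fun y => decide (x < y)) ys h).countP_eq
        (fun b => decide (b < y))
      have e1 : invW (y :: gammaGo (fun y => decide (x < y)) h ys)
          = ys.countP (fun b => decide (b < y)) + invW (gammaGo (fun y => decide (x < y)) h ys) := by
        rw [invW_cons, hc1, List.countP_cons]
        have hnh : ¬ (h < y) := by omega
        simp [hnh]
      have e2 : invW (h :: y :: ys)
          = (ys.countP (fun b => decide (b < h)) + 1) + (ys.countP (fun b => decide (b < y)) + invW ys) := by
        rw [invW_cons, invW_cons, List.countP_cons]
        simp [hhy]
      have e3 : (h :: y :: ys).countP (fun b => decide (x < b))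
          = ys.countP (fun b => decide (x < b)) + 1 := by
        rw [List.countP_cons, List.countP_cons]
        simp [hh, hy]
      have e4 : invW (h :: ys) = ys.countP (fun b => decide (b < h)) + invW ys := invW_cons _ _
      have e5 : (h :: ys).countP (fun b => decide (x < b))
          = ys.countP (fun b => decide (x < b)) + 1 := by
        rw [List.countP_cons]; simp [hh]
      rw [e4, e5] at ihh
      rw [e1, e2, e3]
      simp only [List.length_cons] at *
      omega

lemma invW_gamma_desc (x h : ℕ) (t : List ℕ) (hh : h < x) (hne : ∀ y ∈ t, y ≠ x) :
    invW (x :: gammaX x (h :: t)) = invW (h :: t) + (h :: t).length := by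
  have hg : gammaX x (h :: t) = gammaGo (fun y => decide (y < x)) h t := by
    simp only [gammaX, hh, if_true]
  rw [hg, invW_cons]
  have hd := gammaGo_desc x t h hh hne
  have hc := (gammaGo_perm (fun y => decide (y < x)) t h).countP_eq
    (fun b => decide (b < x))
  omega

lemma invW_gamma_asc (x h : ℕ) (t : List ℕ) (hh : x < h) (hne : ∀ y ∈ t, y ≠ x) :
    invW (x :: gammaX x (h :: t)) = invW (h :: t) := by
  have hnh : ¬ (h < x) := by omega
  have hg : gammaX x (h :: t) = gammaGo (fun y => decide (x < y)) h t := by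
    simp only [gammaX, hnh, if_false]
  rw [hg, invW_cons]
  have ha := gammaGo_asc x t h hh hne
  have hc := (gammaGo_perm (fun y => decide (x < y)) t h).countP_eq
    (fun b => decide (b < x))
  have hsplit : ∀ (l : List ℕ), (∀ y ∈ l, y ≠ x) →
      l.countP (fun b => decide (b < x)) + l.countP (fun b => decide (x < b)) = l.length := by
    intro l
    induction l with
    | nil => simp
    | cons a as ihl =>
      intro ha'
      have h1 : a ≠ x := ha' a (List.mem_cons_self)
      have h2 := ihl (fun y hy => ha' y (List.mem_cons_of_mem _ hy))
      rw [List.countP_cons, List.countP_cons, List.length_cons]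
      rcases Nat.lt_or_ge a x with hlt | hge
      · have : ¬ (x < a) := by omega
        simp [hlt, this]; omega
      · have hgt : x < a := by omega
        have : ¬ (a < x) := by omega
        simp [hgt, this]; omega
  have hs := hsplit (h :: t) (by
    intro y hy
    rcases List.mem_cons.1 hy with rfl | hy'
    · omega
    · exact hne y hy')
  omega

lemma getD_take_eq (w : List ℕ) (t s : ℕ) (h : s < t) :
    (w.take t).getD s 0 = w.getD s 0 := by
  simp [List.getD_eq_getElem?_getD, List.getElem?_take, h]

lemma nthW_take_eq (w : List ℕ) (t s : ℕ) (h1 : 1 ≤ s) (h2 : s ≤ t) :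
    nthW (w.take t) s = nthW w s := by
  rw [nthW, nthW, getD_take_eq w t (s - 1) (by omega)]

lemma majW_take_succ (w : List ℕ) (k : ℕ) (hk : 1 ≤ k) (hlen : k + 1 ≤ w.length) :
    majW (w.take (k + 1)) = majW (w.take k) + (if nthW w (k + 1) < nthW w k then k else 0) := by
  rw [majW, majW]
  have l1 : (w.take (k + 1)).length = k + 1 := by
    rw [List.length_take]; omega
  have l2 : (w.take k).length = k := by
    rw [List.length_take]; omega
  rw [l1, l2]
  simp only [Nat.add_sub_cancel]
  rw [Finset.sum_filter, Finset.sum_filter]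
  have hksub : k = (k - 1) + 1 := by omega
  rw [hksub, Finset.sum_Icc_succ_top (by omega : 1 ≤ (k - 1) + 1), ← hksub]
  have hsum : ∀ t : ℕ, k ≤ t →
      (∑ i ∈ Finset.Icc 1 (k - 1), (if nthW (w.take t) (i + 1) < nthW (w.take t) i then (id i) else 0))
      = ∑ i ∈ Finset.Icc 1 (k - 1), (if nthW w (i + 1) < nthW w i then (id i) else 0) := by
    intro t ht
    refine Finset.sum_congr rfl fun i hi => ?_
    have hi' := Finset.mem_Icc.1 hi
    rw [nthW_take_eq w t (i + 1) (by omega) (by omega), nthW_take_eq w t i (by omega) (by omega)]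
  rw [hsum (k + 1) (by omega), hsum k le_rfl]
  rw [nthW_take_eq w (k + 1) (k + 1) (by omega) (by omega),
    nthW_take_eq w (k + 1) k (by omega) (by omega)]
  simp

lemma getD_drop_eq (w : List ℕ) (i j : ℕ) : (w.drop i).getD j 0 = w.getD (i + j) 0 := by
  simp [List.getD_eq_getElem?_getD, List.getElem?_drop]


/-- Properties of Assaf's operator `𝒜_k`.
Let `w' = 𝒜_k(w)`.
(1) If `w_k > w_{k+1}` then `maj(w_1⋯w_{k+1}) = maj(w'_1⋯w'_k) + k` and
`inv(w'_k⋯w'_n) = inv(w_{k+1}⋯w_n) + (n-k)`.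
(2) If `w_k < w_{k+1}` then `maj(w_1⋯w_{k+1}) = maj(w'_1⋯w'_k)` and
`inv(w'_k⋯w'_n) = inv(w_{k+1}⋯w_n)`. -/
theorem Aop_maj_inv (n k : ℕ) (hn : 2 ≤ n) (hk : 1 ≤ k) (hk2 : k ≤ n - 1)
    (w : List ℕ) (hw : IsPermList n w) :
    (nthW w (k + 1) < nthW w k →
      (majW (w.take (k + 1)) = majW ((Aop k w).take k) + k ∧
        invW ((Aop k w).drop (k - 1)) = invW (w.drop k) + (n - k))) ∧
    (nthW w k < nthW w (k + 1) →
      (majW (w.take (k + 1)) = majW ((Aop k w).take k) ∧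
        invW ((Aop k w).drop (k - 1)) = invW (w.drop k))) := by
  have hlen : w.length = n := by simpa using hw.length_eq
  have hnd : w.Nodup := hw.nodup_iff.2 (List.nodup_range' (s := 1) (n := n))
  have hkn : k < n := by omega
  set x := nthW w k with hxdef
  have hul : (w.drop k).length = n - k := by simp [hlen]
  have hune : w.drop k ≠ [] := by
    intro hnil
    have := congrArg List.length hnil
    rw [hul] at this
    simp at this
    omega
  obtain ⟨h1, t, hut⟩ := List.exists_cons_of_ne_nil hune
  have hh1 : h1 = nthW w (k + 1) := by
    have h0 : (w.drop k).getD 0 0 = w.getD (k + 0) 0 := getD_drop_eq w k 0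
    rw [nthW]
    simp only [Nat.add_sub_cancel]
    rw [← Nat.add_zero k, ← h0, hut]
    rfl
  have hx_take : x ∈ w.take k := by
    have hlt : k - 1 < (w.take k).length := by rw [List.length_take]; omega
    have hg := List.getD_eq_getElem (w.take k) 0 hlt
    have : x = (w.take k)[k - 1] := by
      rw [hxdef, nthW, ← getD_take_eq w k (k - 1) (by omega), hg]
    rw [this]
    exact List.getElem_mem _
  have hdisj : ∀ y ∈ w.drop k, y ≠ x := by
    have hnd2 : (w.take k ++ w.drop k).Nodup := by rw [List.take_append_drop]; exact hnd
    have hD := (List.nodup_append.1 hnd2).2.2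
    intro y hy hxy
    subst hxy
    exact hD _ hx_take _ hy rfl
  have hne_t : ∀ y ∈ t, y ≠ x := fun y hy => hdisj y (hut ▸ List.mem_cons_of_mem _ hy)
  have htake : (Aop k w).take k = w.take k := by
    rw [Aop]
    exact List.take_left' (by rw [List.length_take]; omega)
  have hdrop : (Aop k w).drop (k - 1) = x :: gammaX x (w.drop k) := by
    rw [Aop, List.drop_append]
    have hlt : (w.take k).length = k := by rw [List.length_take]; omega
    rw [hlt]
    have h0 : k - 1 - k = 0 := by omega
    rw [h0, List.drop_zero]
    have hlen1 : ((w.take k).drop (k - 1)).length = 1 := by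
      rw [List.length_drop, hlt]; omega
    cases hc : (w.take k).drop (k - 1) with
    | nil => rw [hc] at hlen1; simp at hlen1
    | cons a l =>
      rw [hc] at hlen1
      rw [List.length_cons] at hlen1
      have hl : l = [] := List.length_eq_zero_iff.1 (by omega)
      subst hl
      have ha : a = x := by
        have h2 : ((w.take k).drop (k - 1)).getD 0 0 = w.getD (k - 1) 0 := by
          rw [getD_drop_eq, Nat.add_zero, getD_take_eq w k (k - 1) (by omega)]
        rw [hc] at h2
        simpa [hxdef, nthW] using h2
      rw [ha]
      rfl
  have hmaj := majW_take_succ w k hk (by omega)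
  constructor
  · intro hdesc
    constructor
    · rw [htake, hmaj, if_pos hdesc]
    · rw [hdrop, hut]
      have hh1x : h1 < x := hh1 ▸ hdesc
      rw [invW_gamma_desc x h1 t hh1x hne_t, ← hut, hul]
  · intro hasc
    constructor
    · rw [htake, hmaj, if_neg (Nat.lt_asymm hasc), Nat.add_zero]
    · rw [hdrop, hut]
      have hh1x : x < h1 := hh1 ▸ hasc
      rw [invW_gamma_asc x h1 t hh1x hne_t, ← hut]


end
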